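/- Let m and n be integers with 3 ≤ m ≤ n, set u = m+n-2, and let a_1, …, a_{m-1} ∈ ℂ. Let U be the u×u matrix with entries U_{ij} = a_{m-1-(j-i)} whenever 0 ≤ j-i ≤ m-2, U_{ij} = -1 whenever i = j+1, U_{1u} = 1, and all other entries 0. For 0 ≤ t ≤ u-1, let U^{(t)} be the (u-t)×(u-t) matrix obtained from U by deleting its first t rows and its first t columns. Then det U^{(t)} = λ_{u+m-1-t} + δ_{0,t}, where δ_{0,t} is the Kronecker delta (equal to 1 if t = 0 and 0 otherwise). -/

import Mathlib

/-- The `u×u` matrix `U`: `U_{ij} = a_{m-1-(j-i)}` when `0 ≤ j-i ≤ m-2` (with `a` 1-based),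
`U_{ij} = -1` when `i = j+1`, `U` has a `1` in the upper-right corner, and all other
entries are `0` (here rows and columns are 0-based). -/
def Umat (m u : ℕ) (a : ℕ → ℂ) : Matrix (Fin u) (Fin u) ℂ :=
  Matrix.of fun i j =>
    if (i : ℕ) ≤ (j : ℕ) ∧ (j : ℕ) - (i : ℕ) ≤ m - 2 then a (m - 1 - ((j : ℕ) - (i : ℕ)))
    else if (i : ℕ) = (j : ℕ) + 1 then -1
    else if (i : ℕ) = 0 ∧ (j : ℕ) = u - 1 then 1
    else 0

def Uent (m u : ℕ) (a : ℕ → ℂ) (i j : ℕ) : ℂ :=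
  if i ≤ j ∧ j - i ≤ m - 2 then a (m - 1 - (j - i))
  else if i = j + 1 then -1
  else if i = 0 ∧ j = u - 1 then 1
  else 0

lemma Uent_band {m u i j : ℕ} (a : ℕ → ℂ) (h1 : i ≤ j) (h2 : j - i ≤ m - 2) :
    Uent m u a i j = a (m - 1 - (j - i)) := by rw [Uent, if_pos ⟨h1, h2⟩]

lemma Uent_sub {m u i j : ℕ} (a : ℕ → ℂ) (h : i = j + 1) :
    Uent m u a i j = -1 := by rw [Uent, if_neg (by omega), if_pos h]

lemma Uent_corner {m u i j : ℕ} (a : ℕ → ℂ) (hi : i = 0) (hj : j = u - 1)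
    (hb : m - 2 < j - i) : Uent m u a i j = 1 := by
  rw [Uent, if_neg (by omega), if_neg (by omega), if_pos ⟨hi, hj⟩]

lemma Uent_zero {m u i j : ℕ} (a : ℕ → ℂ) (hb : ¬(i ≤ j ∧ j - i ≤ m - 2))
    (hs : i ≠ j + 1) (hc : ¬(i = 0 ∧ j = u - 1)) : Uent m u a i j = 0 := by
  rw [Uent, if_neg hb, if_neg hs, if_neg hc]

def Dmat (m u : ℕ) (a : ℕ → ℂ) (N t s : ℕ) : Matrix (Fin N) (Fin N) ℂ :=
  Matrix.of fun i j =>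
    Uent m u a (if (i : ℕ) = 0 then t else t + s + (i : ℕ)) (t + s + (j : ℕ))

lemma sumB (m : ℕ) (a lam : ℕ → ℂ) (hm : 1 ≤ m)
    (hrec : ∀ t : ℕ, m ≤ t → lam t = ∑ k ∈ Finset.Icc 1 (m - 1), a (m - k) * lam (t - k))
    (T : ℕ) (hT : m ≤ T) :
    ∑ k ∈ Finset.Ico 0 (m - 1), a (m - 1 - k) * lam (T - 1 - k) = lam T := by
  rw [hrec T hT, show Finset.Icc 1 (m - 1) = Finset.Ico 1 m by
      ext x; simp only [Finset.mem_Icc, Finset.mem_Ico]; omega,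
    Finset.sum_Ico_eq_sum_range, Finset.sum_Ico_eq_sum_range, Nat.sub_zero]
  apply Finset.sum_congr rfl
  intro i _
  rw [show m - 1 - (0 + i) = m - (1 + i) by omega, show T - 1 - (0 + i) = T - (1 + i) by omega]

lemma succAbove_one_val {N : ℕ} (i : Fin (N + 1)) :
    (((1 : Fin (N + 2)).succAbove i) : ℕ) = if (i : ℕ) = 0 then 0 else (i : ℕ) + 1 := by
  rcases Nat.eq_zero_or_pos (i : ℕ) with h | h
  · have : i = 0 := Fin.ext h
    subst this
    simp [Fin.succAbove, Fin.lt_def]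
  · have h1 : ¬ (i : ℕ) = 0 := by omega
    simp only [h1, if_false]
    have hlt : ¬ (i.castSucc < (1 : Fin (N + 2))) := by
      rw [Fin.lt_def]; show ¬ (i : ℕ) < ((1 : Fin (N + 2)) : ℕ); rw [Fin.val_one]; omega
    simp [Fin.succAbove, hlt]

lemma keyA (m u : ℕ) (a lam : ℕ → ℂ) (hm : 3 ≤ m) (hmu : m ≤ u)
    (hlam0 : ∀ t : ℕ, 1 ≤ t → t ≤ m - 2 → lam t = 0)
    (hlam1 : lam (m - 1) = 1)
    (hrec : ∀ t : ℕ, m ≤ t → lam t = ∑ k ∈ Finset.Icc 1 (m - 1), a (m - k) * lam (t - k)) :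
    ∀ N t s : ℕ, t + s + (N + 1) = u →
      (Dmat m u a (N + 1) t s).det
        = (∑ k ∈ Finset.Ico s (m - 1), a (m - 1 - k) * lam (u + m - 2 - t - k))
          + (if t = 0 then 1 else 0) := by
  intro N
  induction N with
  | zero =>
    intro t s htu
    rw [Matrix.det_fin_one]
    have e0 : (Dmat m u a 1 t s) 0 0 = Uent m u a t (t + s) := by
      simp [Dmat]
    rw [e0]
    by_cases hs : s ≤ m - 2
    · have ht1 : 1 ≤ t := by omega
      rw [Uent_band a (by omega) (by omega : t + s - t ≤ m - 2)]
      rw [Finset.sum_eq_sum_Ico_succ_bot (by omega : s < m - 1)]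
      rw [show u + m - 2 - t - s = m - 1 by omega, show t + s - t = s by omega, hlam1]
      rw [Finset.sum_eq_zero (fun k hk => by
        simp only [Finset.mem_Ico] at hk
        rw [hlam0 (u + m - 2 - t - k) (by omega) (by omega), mul_zero])]
      rw [if_neg (by omega : ¬ t = 0)]
      ring
    · rw [show Finset.Ico s (m - 1) = ∅ by rw [Finset.Ico_eq_empty]; omega]
      simp only [Finset.sum_empty, zero_add]
      by_cases ht0 : t = 0
      · rw [Uent_corner a ht0 (by omega) (by omega), if_pos ht0]
      · rw [Uent_zero a (by omega) (by omega) (by omega), if_neg ht0]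
  | succ N ih =>
    intro t s htu
    rw [Matrix.det_succ_column_zero]
    rw [Fin.sum_univ_succ, Fin.sum_univ_succ]
    have hzero : ∀ i : Fin N, ((-1 : ℂ)) ^ (((i.succ.succ : Fin (N + 2))) : ℕ)
        * (Dmat m u a (N + 2) t s) i.succ.succ 0
        * ((Dmat m u a (N + 2) t s).submatrix i.succ.succ.succAbove Fin.succ).det = 0 := by
      intro i
      have hv : (((i.succ.succ : Fin (N + 2))) : ℕ) = (i : ℕ) + 2 := rfl
      have he : (Dmat m u a (N + 2) t s) i.succ.succ 0 = 0 := by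
        show Uent m u a (if ((i.succ.succ : Fin (N+2)) : ℕ) = 0 then t
            else t + s + ((i.succ.succ : Fin (N+2)) : ℕ)) (t + s + ((0 : Fin (N+2)) : ℕ)) = 0
        rw [hv, show ((0 : Fin (N+2)) : ℕ) = 0 from rfl, if_neg (by omega)]
        exact Uent_zero a (by omega) (by omega) (by omega)
      rw [he, mul_zero, zero_mul]
    rw [Finset.sum_eq_zero (fun i _ => hzero i), add_zero]
    have hminor0 : (Dmat m u a (N + 2) t s).submatrix (Fin.succAbove 0) Fin.succ
        = Dmat m u a (N + 1) (t + s + 1) 0 := by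
      ext i j
      simp only [Matrix.submatrix_apply, Fin.succAbove_zero, Dmat, Matrix.of_apply,
        Fin.val_succ]
      rw [if_neg (by omega : ¬ (i : ℕ) + 1 = 0)]
      by_cases hi : (i : ℕ) = 0
      · rw [if_pos hi, hi]
        rw [show t + s + (0 + 1) = t + s + 1 by omega,
          show t + s + ((j : ℕ) + 1) = t + s + 1 + 0 + (j : ℕ) by omega]
      · rw [if_neg hi]
        rw [show t + s + ((i : ℕ) + 1) = t + s + 1 + 0 + (i : ℕ) by omega,
          show t + s + ((j : ℕ) + 1) = t + s + 1 + 0 + (j : ℕ) by omega]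
    have hminor1 : (Dmat m u a (N + 2) t s).submatrix ((0 : Fin (N + 1)).succ).succAbove Fin.succ
        = Dmat m u a (N + 1) t (s + 1) := by
      ext i j
      simp only [Matrix.submatrix_apply, Dmat, Matrix.of_apply, Fin.val_succ]
      have hv : ((((0 : Fin (N + 1)).succ).succAbove i) : ℕ)
          = if (i : ℕ) = 0 then 0 else (i : ℕ) + 1 := succAbove_one_val i
      rw [hv]
      by_cases hi : (i : ℕ) = 0
      · rw [if_pos hi, if_pos rfl, if_pos hi]
        rw [show t + s + ((j : ℕ) + 1) = t + (s + 1) + (j : ℕ) by omega]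
      · rw [if_neg hi, if_neg (by omega : ¬ (i : ℕ) + 1 = 0), if_neg hi]
        rw [show t + s + ((i : ℕ) + 1) = t + (s + 1) + (i : ℕ) by omega,
          show t + s + ((j : ℕ) + 1) = t + (s + 1) + (j : ℕ) by omega]
    rw [hminor0, hminor1]
    rw [ih (t + s + 1) 0 (by omega), ih t (s + 1) (by omega)]
    have hsum0 : (∑ k ∈ Finset.Ico 0 (m - 1), a (m - 1 - k) * lam (u + m - 2 - (t + s + 1) - k))
        = lam (u + m - 2 - t - s) := by
      rw [← sumB m a lam (by omega) hrec (u + m - 2 - t - s) (by omega)]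
      apply Finset.sum_congr rfl
      intro k hk
      simp only [Finset.mem_Ico] at hk
      congr 2
      omega
    rw [hsum0, if_neg (by omega : ¬ t + s + 1 = 0), add_zero]
    have hA1 : (Dmat m u a (N + 2) t s) (0 : Fin (N + 1)).succ 0 = -1 := by
      show Uent m u a (if (((0 : Fin (N + 1)).succ : Fin (N+2)) : ℕ) = 0 then t
          else t + s + (((0 : Fin (N + 1)).succ : Fin (N+2)) : ℕ))
        (t + s + ((0 : Fin (N+2)) : ℕ)) = -1
      rw [show (((0 : Fin (N + 1)).succ : Fin (N+2)) : ℕ) = 1 from rfl,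
        show ((0 : Fin (N+2)) : ℕ) = 0 from rfl]
      rw [if_neg (by omega)]
      exact Uent_sub a (by omega)
    have hA0 : (Dmat m u a (N + 2) t s) 0 0 = Uent m u a t (t + s) := by
      show Uent m u a (if ((0 : Fin (N+2)) : ℕ) = 0 then t else t + s + ((0 : Fin (N+2)) : ℕ))
        (t + s + ((0 : Fin (N+2)) : ℕ)) = _
      rw [show ((0 : Fin (N+2)) : ℕ) = 0 from rfl, if_pos rfl, Nat.add_zero]
    rw [hA1, hA0]
    simp only [Fin.val_zero, Fin.val_succ, pow_zero, zero_add, pow_one, one_mul]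
    by_cases hs : s ≤ m - 2
    · rw [Uent_band a (by omega) (by omega : t + s - t ≤ m - 2),
        show t + s - t = s by omega]
      rw [Finset.sum_eq_sum_Ico_succ_bot (by omega : s < m - 1)]
      ring
    · rw [Uent_zero a (by omega) (by omega) (by omega : ¬(t = 0 ∧ t + s = u - 1))]
      rw [show Finset.Ico (s + 1) (m - 1) = ∅ by rw [Finset.Ico_eq_empty]; omega,
        show Finset.Ico s (m - 1) = ∅ by rw [Finset.Ico_eq_empty]; omega]
      simp only [Finset.sum_empty, zero_add]
      ring

theorem stmt14 (m n u : ℕ) (hm : 3 ≤ m) (hmn : m ≤ n) (hu : u = m + n - 2)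
    (a : ℕ → ℂ) (lam : ℕ → ℂ)
    (hlam0 : ∀ t : ℕ, 1 ≤ t → t ≤ m - 2 → lam t = 0)
    (hlam1 : lam (m - 1) = 1)
    (hrec : ∀ t : ℕ, m ≤ t → lam t = ∑ k ∈ Finset.Icc 1 (m - 1), a (m - k) * lam (t - k))
    (t : ℕ) (ht : t ≤ u - 1) :
    ((Umat m u a).submatrix
        (fun i : Fin (u - t) => (⟨t + (i : ℕ), by have := i.isLt; omega⟩ : Fin u))
        (fun j : Fin (u - t) => (⟨t + (j : ℕ), by have := j.isLt; omega⟩ : Fin u))).det =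
      lam (u + m - 1 - t) + (if t = 0 then 1 else 0) := by
  have hu2 : m + 1 ≤ u := by omega
  have hM : ((Umat m u a).submatrix
        (fun i : Fin (u - t) => (⟨t + (i : ℕ), by have := i.isLt; omega⟩ : Fin u))
        (fun j : Fin (u - t) => (⟨t + (j : ℕ), by have := j.isLt; omega⟩ : Fin u)))
      = Dmat m u a (u - t) t 0 := by
    ext i j
    show Uent m u a (t + (i : ℕ)) (t + (j : ℕ))
        = Uent m u a (if (i : ℕ) = 0 then t else t + 0 + (i : ℕ)) (t + 0 + (j : ℕ))
    by_cases hi : (i : ℕ) = 0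
    · rw [if_pos hi, hi]; simp only [Nat.add_zero]
    · rw [if_neg hi]; simp only [Nat.add_zero]
  rw [hM, show u - t = (u - t - 1) + 1 by omega]
  rw [keyA m u a lam hm (by omega) hlam0 hlam1 hrec (u - t - 1) t 0 (by omega)]
  congr 1
  rw [← sumB m a lam (by omega) hrec (u + m - 1 - t) (by omega)]
  apply Finset.sum_congr rfl
  intro k _
  congr 2
  omega
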